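/- For each positive integer n, the sum over all binary trees T with n vertices of the product over all vertices v of T of (1 + 1/h_v) equals 2^n * (n+1)^(n-1) / n!, where h_v is the hook length of v (the number of descendants of v, including v itself). -/

import Mathlib

/-- A binary tree: `nil` is the empty tree, `node l r` is a vertex with
(possibly empty) left subtree `l` and right subtree `r`. -/
inductive BinTree where
  | nil : BinTree
  | node : BinTree → BinTree → BinTree

/-- Number of vertices of a binary tree. -/
def BinTree.size : BinTree → ℕ
  | .nil => 0
  | .node l r => l.size + r.size + 1

/-- The multiset of hook lengths of the vertices of a binary tree
(the hook length of a vertex is the number of vertices of the subtree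
rooted at it, including itself). -/
def BinTree.hooks : BinTree → Multiset ℕ
  | .nil => 0
  | .node l r => (BinTree.node l r).size ::ₘ (l.hooks + r.hooks)

/-! ### Auxiliary material: finiteness of trees of a given size -/

namespace BinTree

def enc : BinTree → List Bool
  | .nil => [false]
  | .node l r => true :: (enc l ++ enc r)

lemma enc_cancel : ∀ t t' : BinTree, ∀ s s' : List Bool,
    enc t ++ s = enc t' ++ s' → t = t' ∧ s = s' := by
  intro t
  induction t with
  | nil => intro t' s s' h; cases t' with
    | nil => simpa [enc] using h
    | node l r => simp [enc] at h
  | node l r ihl ihr =>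
    intro t' s s' h
    cases t' with
    | nil => simp [enc] at h
    | node l' r' =>
      simp only [enc, List.cons_append, List.cons.injEq, List.append_assoc] at h
      obtain ⟨-, h1⟩ := h
      obtain ⟨rfl, h2⟩ := ihl l' _ _ h1
      obtain ⟨rfl, rfl⟩ := ihr r' _ _ h2
      exact ⟨rfl, rfl⟩

lemma enc_injective : Function.Injective enc := by
  intro t t' h
  exact (enc_cancel t t' [] [] (by simp [h])).1

lemma length_enc : ∀ t : BinTree, (enc t).length = 2 * t.size + 1
  | .nil => rfl
  | .node l r => by
      simp [enc, size, length_enc l, length_enc r]; omega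

instance finiteSize (n : ℕ) : Finite {T : BinTree // T.size = n} := by
  haveI : Finite {l : List Bool // l.length = 2 * n + 1} :=
    (inferInstance : Finite (List.Vector Bool (2 * n + 1)))
  have : Function.Injective (fun T : {T : BinTree // T.size = n} =>
      (⟨enc T.1, by simp [length_enc, T.2]⟩ : {l : List Bool // l.length = 2 * n + 1})) := by
    intro T T' h
    have := congrArg Subtype.val h
    exact Subtype.ext (enc_injective this)
  exact Finite.of_injective _ this

noncomputable instance fintypeSize (n : ℕ) : Fintype {T : BinTree // T.size = n} :=
  Fintype.ofFinite _

/-! ### The weight of a tree and the sum over all trees of a given size -/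

noncomputable def w (T : BinTree) : ℝ := ((T.hooks).map (fun h => (1 : ℝ) + 1 / h)).prod

lemma w_nil : w .nil = 1 := by simp [w, hooks]

lemma w_node (l r : BinTree) :
    w (.node l r) = (1 + 1 / ((l.size + r.size + 1 : ℕ) : ℝ)) * (w l * w r) := by
  simp [w, hooks, size, mul_assoc]

lemma eq_nil_of_size_eq_zero : ∀ {T : BinTree}, T.size = 0 → T = .nil
  | .nil, _ => rfl
  | .node l r, h => by simp [size] at h

noncomputable def f (n : ℕ) : ℝ := ∑ T : {T : BinTree // T.size = n}, w T.1

lemma f_zero : f 0 = 1 := by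
  letI : Unique {T : BinTree // T.size = 0} :=
    { default := ⟨.nil, rfl⟩
      uniq := by rintro ⟨T, hT⟩; exact Subtype.ext (eq_nil_of_size_eq_zero hT) }
  rw [f, Fintype.sum_unique]
  exact w_nil

lemma f_succ (n : ℕ) :
    f (n + 1) = (1 + 1 / ((n : ℝ) + 1)) * ∑ i ∈ Finset.range (n + 1), f i * f (n - i) := by
  classical
  set g : (Σ i : Fin (n + 1), {l : BinTree // l.size = i.1} × {r : BinTree // r.size = n - i.1})
      → {T : BinTree // T.size = n + 1} :=
    fun p => ⟨.node p.2.1.1 p.2.2.1, by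
      have hi := p.1.2
      have h1 := p.2.1.2
      have h2 := p.2.2.2
      simp only [size, h1, h2]
      omega⟩ with hg
  have hbij : Function.Bijective g := by
    constructor
    · rintro ⟨⟨i, hi⟩, ⟨l, hl⟩, ⟨r, hr⟩⟩ ⟨⟨i', hi'⟩, ⟨l', hl'⟩, ⟨r', hr'⟩⟩ h
      simp only [hg, Subtype.mk.injEq, BinTree.node.injEq] at h
      obtain ⟨rfl, rfl⟩ := h
      have hii : i = i' := by simpa using hl.symm.trans hl'
      subst hii
      rfl
    · rintro ⟨T, hT⟩
      cases T with
      | nil => simp [size] at hT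
      | node l r =>
        have hs : l.size + r.size = n := by simp [size] at hT; omega
        refine ⟨⟨⟨l.size, by omega⟩, ⟨l, rfl⟩, ⟨r, show r.size = n - l.size by omega⟩⟩, rfl⟩
  have key : f (n + 1) = ∑ p : (Σ i : Fin (n + 1),
      {l : BinTree // l.size = i.1} × {r : BinTree // r.size = n - i.1}), w (g p).1 :=
    (Fintype.sum_bijective g hbij _ _ (fun p => rfl)).symm
  rw [key]
  rw [← Finset.univ_sigma_univ, Finset.sum_sigma]
  have step : ∀ i : Fin (n + 1),
      (∑ q : {l : BinTree // l.size = i.1} × {r : BinTree // r.size = n - i.1},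
        w (g ⟨i, q⟩).1) = (1 + 1 / ((n : ℝ) + 1)) * (f i.1 * f (n - i.1)) := by
    intro i
    rw [Fintype.sum_prod_type]
    have : ∀ (l : {l : BinTree // l.size = i.1}) (r : {r : BinTree // r.size = n - i.1}),
        w (g ⟨i, l, r⟩).1 = (1 + 1 / ((n : ℝ) + 1)) * (w l.1 * w r.1) := by
      intro l r
      have : (l.1.size + r.1.size + 1 : ℕ) = n + 1 := by
        have := i.2; have := l.2; have := r.2; omega
      rw [hg]
      simp only [w_node, this]
      push_cast
      ring
    simp only [this]
    rw [f, f, Finset.sum_mul_sum]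
    rw [Finset.mul_sum]
    refine Finset.sum_congr rfl fun l _ => ?_
    rw [Finset.mul_sum]
  rw [Finset.sum_congr rfl (fun i _ => step i)]
  rw [← Finset.mul_sum, Fin.sum_univ_eq_sum_range (fun i => f i * f (n - i))]

end BinTree

/-! ### Abel polynomials and Abel's binomial identity -/

open Polynomial Finset

noncomputable def abP : ℕ → Polynomial ℝ
  | 0 => 1
  | (k+1) => X * (X + C ((k : ℝ) + 1)) ^ k

lemma abP_eval_zero (k : ℕ) (hk : 1 ≤ k) : (abP k).eval 0 = 0 := by
  cases k with
  | zero => omega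
  | succ k => simp [abP]

lemma deriv_abP (k : ℕ) :
    derivative (abP (k + 1)) = C ((k : ℝ) + 1) * (abP k).comp (X + 1) := by
  cases k with
  | zero => simp [abP]
  | succ k =>
    simp only [abP, derivative_mul, derivative_pow, derivative_X, derivative_add, derivative_C,
      derivative_one, add_zero, mul_one, one_mul, Nat.add_sub_cancel, mul_comp, X_comp,
      add_comp, pow_comp, C_comp]
    push_cast
    simp only [map_add, map_one]
    ring

lemma poly_eq_of_deriv_eq {p q : Polynomial ℝ} (h1 : derivative p = derivative q)
    (h2 : p.eval 0 = q.eval 0) : p = q := by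
  have hd : derivative (p - q) = 0 := by rw [derivative_sub, h1, sub_self]
  have hdeg : (p - q).natDegree = 0 := natDegree_eq_zero_of_derivative_eq_zero hd
  have hC : p - q = C ((p - q).coeff 0) := (Polynomial.eq_C_of_natDegree_le_zero (le_of_eq hdeg))
  have h0 : (p - q).eval 0 = 0 := by rw [eval_sub, h2, sub_self]
  rw [hC] at h0
  simp only [eval_C] at h0
  have : p - q = 0 := by rw [hC, h0, map_zero]
  exact sub_eq_zero.mp this

lemma abel_main : ∀ (n : ℕ) (y : ℝ),
    ∑ k ∈ range (n+1), C ((n.choose k : ℝ)) * abP k * C ((abP (n-k)).eval y)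
      = (abP n).comp (X + C y) := by
  intro n
  induction n with
  | zero => intro y; simp [abP]
  | succ n ih =>
    intro y
    apply poly_eq_of_deriv_eq
    · rw [derivative_sum]
      have hterm : ∀ k ∈ range (n+2),
          derivative (C (((n+1).choose k : ℝ)) * abP k * C ((abP (n+1-k)).eval y))
            = C (((n+1).choose k : ℝ)) * derivative (abP k) * C ((abP (n+1-k)).eval y) := by
        intro k _
        simp [derivative_mul]
      rw [Finset.sum_congr rfl hterm, Finset.sum_range_succ']
      have h0 : C (((n+1).choose 0 : ℝ)) * derivative (abP 0) * C ((abP (n+1-0)).eval y) = 0 := by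
        simp [abP]
      rw [h0, add_zero]
      have hterm2 : ∀ i ∈ range (n+1),
          C (((n+1).choose (i+1) : ℝ)) * derivative (abP (i+1)) * C ((abP (n+1-(i+1))).eval y)
            = C ((n : ℝ) + 1) * (C ((n.choose i : ℝ)) * ((abP i).comp (X+1))
                * C ((abP (n-i)).eval y)) := by
        intro i _
        rw [deriv_abP]
        have hc : (((n+1).choose (i+1) : ℝ)) * ((i : ℝ) + 1) = ((n : ℝ) + 1) * (n.choose i : ℝ) := by
          have := Nat.add_one_mul_choose_eq n i
          have : ((n+1).choose (i+1) * (i+1) : ℕ) = ((n+1) * n.choose i : ℕ) := by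
            simpa [Nat.succ_eq_add_one] using this.symm
          have h2 := congrArg (fun m : ℕ => (m : ℝ)) this
          push_cast at h2
          linarith
        have : n + 1 - (i + 1) = n - i := by omega
        rw [this]
        rw [show C (((n+1).choose (i+1) : ℝ)) * (C ((i : ℝ) + 1) * (abP i).comp (X + 1))
              * C ((abP (n-i)).eval y)
            = C ((((n+1).choose (i+1) : ℝ)) * ((i : ℝ) + 1)) * (abP i).comp (X + 1)
              * C ((abP (n-i)).eval y) from by rw [map_mul]; ring]
        rw [hc, map_mul]
        ring
      rw [Finset.sum_congr rfl hterm2, ← Finset.mul_sum]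
      have hcomp : ∀ i ∈ range (n+1),
          C ((n.choose i : ℝ)) * ((abP i).comp (X+1)) * C ((abP (n-i)).eval y)
            = (C ((n.choose i : ℝ)) * abP i * C ((abP (n-i)).eval y)).comp (X+1) := by
        intro i _
        simp [mul_comp]
      rw [Finset.sum_congr rfl hcomp, ← Polynomial.sum_comp, ih y, Polynomial.comp_assoc]
      rw [Polynomial.derivative_comp, deriv_abP]
      simp only [derivative_add, derivative_X, derivative_C, add_zero, mul_comp, C_comp,
        add_comp, X_comp, one_comp, one_mul, mul_one]
      rw [Polynomial.comp_assoc]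
      simp only [add_comp, X_comp, C_comp, one_comp]
      ring_nf
    · rw [Polynomial.eval_comp]
      simp only [eval_add, eval_X, eval_C, zero_add]
      rw [Finset.sum_range_succ', eval_add, Polynomial.eval_finset_sum]
      have h0 : ∀ i ∈ range (n+1),
          eval 0 (C (((n+1).choose (i+1) : ℝ)) * abP (i+1) * C ((abP (n+1-(i+1))).eval y)) = 0 := by
        intro i _
        simp [abP_eval_zero (i+1) (by omega)]
      rw [Finset.sum_congr rfl h0]
      simp [show abP 0 = 1 from rfl]

lemma abP_eval_one (k : ℕ) : (abP k).eval 1 = ((k : ℝ) + 1) ^ (k - 1) := by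
  cases k with
  | zero => simp [abP]
  | succ k =>
    simp only [abP, eval_mul, eval_pow, eval_add, eval_X, eval_C, one_mul, Nat.add_sub_cancel]
    push_cast
    ring

lemma abP_eval_two (k : ℕ) (hk : 1 ≤ k) : (abP k).eval 2 = 2 * ((k : ℝ) + 2) ^ (k - 1) := by
  cases k with
  | zero => omega
  | succ k =>
    simp only [abP, eval_mul, eval_pow, eval_add, eval_X, eval_C, Nat.add_sub_cancel]
    push_cast
    ring

lemma abel_sum (n : ℕ) :
    ∑ k ∈ range (n+1), (n.choose k : ℝ) * (((k:ℝ)+1)^(k-1) * (((n-k : ℕ) : ℝ)+1)^(n-k-1))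
      = (abP n).eval 2 := by
  have h := congrArg (eval 1) (abel_main n 1)
  rw [Polynomial.eval_finset_sum, Polynomial.eval_comp] at h
  simp only [eval_mul, eval_C, eval_add, eval_X, abP_eval_one] at h
  norm_num at h
  rw [← h]
  refine Finset.sum_congr rfl fun k _ => ?_
  ring

/-! ### The closed formula -/

lemma f_closed : ∀ n : ℕ, BinTree.f n = 2^n * ((n:ℝ)+1)^(n-1) / (Nat.factorial n : ℝ) := by
  intro n
  induction n using Nat.strong_induction_on with
  | _ n ih =>
    cases n with
    | zero => simpa using BinTree.f_zero
    | succ m =>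
      rw [BinTree.f_succ m]
      have hterm : ∀ i ∈ range (m+1), BinTree.f i * BinTree.f (m - i)
          = 2^m / (Nat.factorial m : ℝ)
            * ((m.choose i : ℝ) * (((i:ℝ)+1)^(i-1) * (((m-i : ℕ):ℝ)+1)^(m-i-1))) := by
        intro i hi
        have hi' : i ≤ m := by
          have := Finset.mem_range.mp hi; omega
        rw [ih i (by omega), ih (m-i) (by omega)]
        have hch : (m.choose i : ℝ)
            = (Nat.factorial m : ℝ) / ((Nat.factorial i : ℝ) * (Nat.factorial (m-i) : ℝ)) :=
          Nat.cast_choose ℝ hi'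
        have h2 : (2:ℝ)^i * 2^(m-i) = 2^m := by rw [← pow_add]; congr 1; omega
        have f1 : (Nat.factorial i : ℝ) ≠ 0 := Nat.cast_ne_zero.mpr (Nat.factorial_ne_zero i)
        have f2 : (Nat.factorial (m-i) : ℝ) ≠ 0 := Nat.cast_ne_zero.mpr (Nat.factorial_ne_zero _)
        have f3 : (Nat.factorial m : ℝ) ≠ 0 := Nat.cast_ne_zero.mpr (Nat.factorial_ne_zero m)
        rw [hch]
        field_simp
        rw [← h2]
      rw [Finset.sum_congr rfl hterm, ← Finset.mul_sum, abel_sum m]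
      cases m with
      | zero =>
        norm_num [show (abP 0).eval 2 = 1 from by simp [abP], Nat.factorial]
      | succ k =>
        rw [abP_eval_two (k+1) (by omega)]
        have hfe : (Nat.factorial (k+2) : ℝ) = ((k:ℝ)+2) * (Nat.factorial (k+1) : ℝ) := by
          rw [Nat.factorial_succ]; push_cast; ring
        have f3 : (Nat.factorial (k+1) : ℝ) ≠ 0 := Nat.cast_ne_zero.mpr (Nat.factorial_ne_zero _)
        have hk1 : ((k:ℝ) + 1) ≠ 0 := by positivity
        have hk2 : ((k:ℝ) + 2) ≠ 0 := by positivity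
        simp only [Nat.add_sub_cancel]
        rw [hfe]
        push_cast
        field_simp
        ring

theorem postnikov_hook_length (n : ℕ) (hn : 1 ≤ n) :
    ∑' T : {T : BinTree // T.size = n},
      ((T.1.hooks).map (fun h => (1 : ℝ) + 1 / h)).prod
      = 2 ^ n * ((n : ℝ) + 1) ^ (n - 1) / (Nat.factorial n : ℝ) := by
  rw [tsum_fintype]
  exact f_closed n
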